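/- If (S,R) is a positive presentation such that every relation v = v' of R satisfies |len(v) − len(v')| ≤ 2, then for all words w, w' over S ∪ S⁻¹, the relation w ⇝_{0,D} w' (obtained from w by type 0 transformations and Dehn transformations with respect to R) implies w ⇝_{0,1,2} w' (obtained by special transformations of types 0, 1, 2). -/

import Mathlib

namespace ArtinConj

/-- A word over `S ∪ S⁻¹`: a letter is a generator together with a sign
(`true` = positive letter `s`, `false` = negative letter `s⁻¹`). -/
abbrev Word (S : Type) := List (S × Bool)

/-- The positive word associated to a list of generators. -/
def pos {S : Type} (v : List S) : Word S := v.map fun s => (s, true)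

/-- The formal inverse of a word. -/
def winv {S : Type} (w : Word S) : Word S := (w.map fun p => (p.1, !p.2)).reverse

/-- A presentation `(S, R)` is positive if all relations `v = v'` have both
sides nonempty positive words. -/
def Positive {S : Type} (R : Set (List S × List S)) : Prop :=
  ∀ p ∈ R, p.1 ≠ [] ∧ p.2 ≠ []

/-- `v = v'` is a relation of `R` (relations are unoriented). -/
def InR {S : Type} (R : Set (List S × List S)) (v v' : List S) : Prop :=
  (v, v') ∈ R ∨ (v', v) ∈ R

/-- Special transformations of types `0`, `1`, `2ℓ`, `2r` associated with a
positive presentation. -/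
inductive Step {S : Type} (R : Set (List S × List S)) : Word S → Word S → Prop
  /-- type 0 : remove a trivial pair `s s⁻¹` or `s⁻¹ s`. -/
  | free (w₁ w₂ : Word S) (s : S) (e : Bool) :
      Step R (w₁ ++ [(s, e), (s, !e)] ++ w₂) (w₁ ++ w₂)
  /-- type 1 : replace a factor `v` by `v'` for a relation `v = v'`. -/
  | rel (w₁ w₂ : Word S) (v v' : List S) (h : InR R v v') :
      Step R (w₁ ++ pos v ++ w₂) (w₁ ++ pos v' ++ w₂)
  /-- type 1 : replace a factor `v⁻¹` by `v'⁻¹` for a relation `v = v'`. -/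
  | relInv (w₁ w₂ : Word S) (v v' : List S) (h : InR R v v') :
      Step R (w₁ ++ winv (pos v) ++ w₂) (w₁ ++ winv (pos v') ++ w₂)
  /-- type 2r : replace `v⁻¹ v'` by `u u'⁻¹` where `v u = v' u'` is a relation,
  `v, v'` nonempty. -/
  | rev2r (w₁ w₂ : Word S) (v v' u u' : List S) (hv : v ≠ []) (hv' : v' ≠ [])
      (h : InR R (v ++ u) (v' ++ u')) :
      Step R (w₁ ++ winv (pos v) ++ pos v' ++ w₂) (w₁ ++ pos u ++ winv (pos u') ++ w₂)
  /-- type 2ℓ : replace `v v'⁻¹` by `u⁻¹ u'` where `u v = u' v'` is a relation,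
  `v, v'` nonempty. -/
  | rev2l (w₁ w₂ : Word S) (v v' u u' : List S) (hv : v ≠ []) (hv' : v' ≠ [])
      (h : InR R (u ++ v) (u' ++ v')) :
      Step R (w₁ ++ pos v ++ winv (pos v') ++ w₂) (w₁ ++ winv (pos u) ++ pos u' ++ w₂)

/-- `w ⇝_{0,1,2} w'`. -/
def Rw {S : Type} (R : Set (List S × List S)) : Word S → Word S → Prop :=
  Relation.ReflTransGen (Step R)

/-- Evaluation of a word in a group, given an interpretation of the generators. -/
def evalW {S G : Type} [Group G] (f : S → G) (w : Word S) : G :=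
  (w.map fun p => if p.2 then f p.1 else (f p.1)⁻¹).prod

/-- The set of elements of the free group corresponding to the relations of `R`. -/
def rels {S : Type} (R : Set (List S × List S)) : Set (FreeGroup S) :=
  {x | ∃ p ∈ R, x = evalW FreeGroup.of (pos p.1) * (evalW FreeGroup.of (pos p.2))⁻¹}

/-- The element of the presented group `⟨S | R⟩` represented by a word. -/
def evalG {S : Type} (R : Set (List S × List S)) (w : Word S) :
    PresentedGroup (rels R) :=
  evalW (fun s => (PresentedGroup.of s : PresentedGroup (rels R))) w

/-- Property `H` : every word representing `1` can be transformed to the empty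
word using special transformations of types `0`, `1`, `2` only. -/
def PropertyH {S : Type} (R : Set (List S × List S)) : Prop :=
  ∀ w : Word S, evalG R w = 1 → Rw R w []


/-- `y` is a cyclic permutation of `x`. -/
def CyclicPerm {S : Type} (x y : Word S) : Prop :=
  ∃ a b : Word S, x = a ++ b ∧ y = b ++ a

/-- Type `0` transformations together with Dehn transformations with respect
to `R`: replace a factor `u` by a strictly shorter `u'` such that `u⁻¹ u'` is a
cyclic permutation of `v⁻¹ v'` or `v'⁻¹ v` for some relation `v = v'` of `R`. -/
inductive DehnStep {S : Type} (R : Set (List S × List S)) : Word S → Word S → Prop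
  | free (w₁ w₂ : Word S) (s : S) (e : Bool) :
      DehnStep R (w₁ ++ [(s, e), (s, !e)] ++ w₂) (w₁ ++ w₂)
  | dehn (w₁ w₂ u u' : Word S) (hlen : u'.length < u.length)
      (h : ∃ v v' : List S, InR R v v' ∧
        CyclicPerm (winv (pos v) ++ pos v') (winv u ++ u')) :
      DehnStep R (w₁ ++ u ++ w₂) (w₁ ++ u' ++ w₂)

section Aux

variable {S : Type} {R : Set (List S × List S)}

@[simp] theorem pos_nil : pos ([] : List S) = [] := rfl

@[simp] theorem winv_nil : winv ([] : Word S) = [] := rfl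

@[simp] theorem pos_append (x y : List S) : pos (x ++ y) = pos x ++ pos y :=
  List.map_append

@[simp] theorem winv_append (x y : Word S) : winv (x ++ y) = winv y ++ winv x := by
  simp [winv]

@[simp] theorem winv_winv (x : Word S) : winv (winv x) = x := by
  simp only [winv, List.map_reverse, List.reverse_reverse, List.map_map]
  conv_rhs => rw [← List.map_id x]
  congr 1
  funext p
  simp

@[simp] theorem pos_length (v : List S) : (pos v).length = v.length := by
  simp [pos]

@[simp] theorem winv_length (x : Word S) : (winv x).length = x.length := by
  simp [winv]

theorem inr_symm {v v' : List S} (h : InR R v v') : InR R v' v := h.symm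

theorem len_bound {v v' : List S}
    (hlen : ∀ p ∈ R, |(p.1.length : ℤ) - (p.2.length : ℤ)| ≤ 2)
    (h : InR R v v') : v.length ≤ v'.length + 2 ∧ v'.length ≤ v.length + 2 := by
  rcases h with h | h
  · have := hlen _ h; rw [abs_le] at this
    simp only at this; constructor <;> omega
  · have := hlen _ h; rw [abs_le] at this
    simp only at this; constructor <;> omega

theorem pos_split {v : List S} {a b : Word S} (h : pos v = a ++ b) :
    ∃ v₁ v₂, v = v₁ ++ v₂ ∧ a = pos v₁ ∧ b = pos v₂ := by
  rw [pos, List.map_eq_append_iff] at h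
  obtain ⟨l₁, l₂, h1, h2, h3⟩ := h
  exact ⟨l₁, l₂, h1, h2.symm, h3.symm⟩

theorem winv_pos_split {v : List S} {a b : Word S} (h : winv (pos v) = a ++ b) :
    ∃ v₁ v₂, v = v₁ ++ v₂ ∧ a = winv (pos v₂) ∧ b = winv (pos v₁) := by
  have h' : pos v = winv b ++ winv a := by
    have := congrArg winv h
    rwa [winv_winv, winv_append] at this
  obtain ⟨v₁, v₂, hv, hb, ha⟩ := pos_split h'
  refine ⟨v₁, v₂, hv, ?_, ?_⟩
  · rw [← winv_winv a, ← ha]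
  · rw [← winv_winv b, ← hb]

theorem rw_single {x y : Word S} (h : Step R x y) : Rw R x y :=
  Relation.ReflTransGen.single h

theorem rw_congr {x x' y y' : Word S} (hx : x = x') (hy : y = y')
    (h : Rw R x' y') : Rw R x y := by rw [hx, hy]; exact h

theorem step_congr {x x' y y' : Word S} (hx : x = x') (hy : y = y')
    (h : Step R x' y') : Step R x y := by rw [hx, hy]; exact h

theorem cancel_left (x w₁ w₂ : Word S) :
    Rw R (w₁ ++ winv x ++ x ++ w₂) (w₁ ++ w₂) := by
  induction x generalizing w₁ with
  | nil => simp; exact Relation.ReflTransGen.refl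
  | cons p t ih =>
    refine Relation.ReflTransGen.head
      (b := (w₁ ++ winv t) ++ (t ++ w₂)) ?_ ?_
    · refine step_congr ?_ rfl (Step.free (w₁ ++ winv t) (t ++ w₂) p.1 (!p.2))
      simp [winv]
    · exact rw_congr (by simp) rfl (ih w₁)

theorem cancel_right (x w₁ w₂ : Word S) :
    Rw R (w₁ ++ x ++ winv x ++ w₂) (w₁ ++ w₂) := by
  have := cancel_left (R := R) (winv x) w₁ w₂
  rwa [winv_winv] at this

theorem dehn_single
    (hlen : ∀ p ∈ R, |(p.1.length : ℤ) - (p.2.length : ℤ)| ≤ 2)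
    {w w' : Word S} (h : DehnStep R w w') : Rw R w w' := by
  cases h with
  | free w₁ w₂ s e => exact rw_single (Step.free w₁ w₂ s e)
  | dehn w₁ w₂ u u' hl hex =>
    obtain ⟨v, v', hR, a, b, hx, hy⟩ := hex
    obtain ⟨hb1, hb2⟩ := len_bound hlen hR
    rw [List.append_eq_append_iff] at hx
    rcases hx with ⟨c, hac, hvc⟩ | ⟨c, hvc, hbc⟩
    · -- Form II : a = winv (pos v) ++ c, pos v' = c ++ b
      obtain ⟨v'₁, v'₂, hv', hc, hbb⟩ := pos_split hvc
      subst hc hbb hac hv'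
      -- hy : winv u ++ u' = pos v'₂ ++ (winv (pos v) ++ pos v'₁)
      rw [List.append_eq_append_iff] at hy
      rcases hy with ⟨d, hd1, hd2⟩ | ⟨d, hd1, hs⟩
      · -- II.1 : pos v'₂ = winv u ++ d
        obtain ⟨r, r', hrr, hwu, hd⟩ := pos_split hd1
        subst hd hrr
        have hu := congrArg winv hwu
        rw [winv_winv] at hu
        subst hu hd2
        simp only [winv_length, pos_length, List.length_append] at hl hb1 hb2
        have h1 : v'₁.length = 0 ∧ r'.length = 0 := by omega
        obtain ⟨e1, e2⟩ := h1
        rw [List.length_eq_zero_iff] at e1 e2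
        subst e1 e2
        refine rw_congr (by simp) (by simp)
          (rw_single (Step.relInv w₁ w₂ r v ?_))
        exact inr_symm (by simpa using hR)
      · -- II.2 : winv u = pos v'₂ ++ d
        rw [List.append_eq_append_iff] at hs
        rcases hs with ⟨e, hde, hre⟩ | ⟨e, hve, hu'e⟩
        · -- II.2.b : d = winv (pos v) ++ e, pos v'₁ = e ++ u'
          obtain ⟨r, r', hrr, he, hu'⟩ := pos_split hre
          subst he hde hrr hu'
          have hu : u = winv (pos v'₂ ++ (winv (pos v) ++ pos r)) := by
            rw [← hd1, winv_winv]
          subst hu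
          refine Relation.ReflTransGen.head
            (b := (w₁ ++ winv (pos r)) ++ pos ((r ++ r') ++ v'₂) ++ (winv (pos v'₂) ++ w₂)) ?_ ?_
          · refine step_congr (by simp) rfl
              (Step.rel (w₁ ++ winv (pos r)) (winv (pos v'₂) ++ w₂) v ((r ++ r') ++ v'₂) hR)
          · refine Relation.ReflTransGen.trans
              (rw_congr (by simp) rfl
                (cancel_left (R := R) (pos r) w₁ (pos r' ++ (pos v'₂ ++ (winv (pos v'₂) ++ w₂))))) ?_
            exact rw_congr (by simp) (by simp)
              (cancel_right (R := R) (pos v'₂) (w₁ ++ pos r') w₂)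
        · -- II.2.a : winv (pos v) = d ++ e, u' = e ++ pos v'₁
          obtain ⟨p, q, hpq, hd, he⟩ := winv_pos_split hve
          subst hd he hpq hu'e
          have hu : u = winv (pos v'₂ ++ winv (pos q)) := by
            rw [← hd1, winv_winv]
          subst hu
          by_cases hq : q = []
          · subst hq
            simp only [winv_length, pos_length, List.length_append, winv_winv,
              List.append_nil, pos_nil, winv_nil, List.length_nil] at hl hb1 hb2
            have h1 : v'₁.length = 0 := by omega
            rw [List.length_eq_zero_iff] at h1
            subst h1
            refine rw_congr (by simp) (by simp)
              (rw_single (Step.relInv w₁ w₂ v'₂ p ?_))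
            exact inr_symm (by simpa using hR)
          · by_cases hp2 : v'₂ = []
            · subst hp2
              simp only [winv_length, pos_length, List.length_append, winv_winv,
                List.append_nil, pos_nil, winv_nil, List.length_nil] at hl hb1 hb2
              have h1 : p.length = 0 := by omega
              rw [List.length_eq_zero_iff] at h1
              subst h1
              refine rw_congr (by simp) (by simp)
                (rw_single (Step.rel w₁ w₂ q v'₁ ?_))
              simpa using hR
            · refine rw_congr (by simp) (by simp)
                (rw_single (Step.rev2l w₁ w₂ q v'₂ p v'₁ hq hp2 ?_))
              exact hR
    · -- Form I : winv (pos v) = a ++ c, b = c ++ pos v'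
      obtain ⟨v₁, v₂, hv, ha, hc⟩ := winv_pos_split hvc
      subst ha hc hbc hv
      rw [List.append_assoc] at hy
      -- hy : winv u ++ u' = winv (pos v₁) ++ (pos v' ++ winv (pos v₂))
      rw [List.append_eq_append_iff] at hy
      rcases hy with ⟨d, hd1, hd2⟩ | ⟨d, hd1, hs⟩
      · -- I.1 : winv (pos v₁) = winv u ++ d
        obtain ⟨p, q, hpq, hwu, hd⟩ := winv_pos_split hd1
        subst hd hpq
        have hu := congrArg winv hwu
        rw [winv_winv, winv_winv] at hu
        subst hu hd2
        simp only [winv_length, pos_length, List.length_append] at hl hb1 hb2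
        have h1 : p.length = 0 ∧ v₂.length = 0 := by omega
        obtain ⟨e1, e2⟩ := h1
        rw [List.length_eq_zero_iff] at e1 e2
        subst e1 e2
        refine rw_congr (by simp) (by simp)
          (rw_single (Step.rel w₁ w₂ q v' ?_))
        simpa using hR
      · -- I.2 : winv u = winv (pos v₁) ++ d
        rw [List.append_eq_append_iff] at hs
        rcases hs with ⟨e, hde, hre⟩ | ⟨e, hve, hu'e⟩
        · -- I.2.b : d = pos v' ++ e, winv (pos v₂) = e ++ u'
          obtain ⟨t, s, hts, he, hu'⟩ := winv_pos_split hre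
          subst he hde hts hu'
          have hu : u = winv (winv (pos v₁) ++ (pos v' ++ winv (pos s))) := by
            rw [← hd1, winv_winv]
          subst hu
          refine Relation.ReflTransGen.head
            (b := (w₁ ++ pos s) ++ winv (pos (v₁ ++ (t ++ s))) ++ (pos v₁ ++ w₂)) ?_ ?_
          · exact step_congr (by simp) rfl
              (Step.relInv (w₁ ++ pos s) (pos v₁ ++ w₂) v' (v₁ ++ (t ++ s)) (inr_symm hR))
          · refine Relation.ReflTransGen.trans
              (rw_congr (by simp) rfl
                (cancel_right (R := R) (pos s) w₁
                  (winv (pos t) ++ (winv (pos v₁) ++ (pos v₁ ++ w₂))))) ?_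
            exact rw_congr (by simp) (by simp)
              (cancel_left (R := R) (pos v₁) (w₁ ++ winv (pos t)) w₂)
        · -- I.2.a : pos v' = d ++ e, u' = e ++ winv (pos v₂)
          obtain ⟨v'₁, v'₂, hv', hd, he⟩ := pos_split hve
          subst hd he hv' hu'e
          have hu : u = winv (winv (pos v₁) ++ pos v'₁) := by
            rw [← hd1, winv_winv]
          subst hu
          by_cases hq : v₁ = []
          · subst hq
            simp only [winv_length, pos_length, List.length_append, winv_winv,
              List.append_nil, List.nil_append, pos_nil, winv_nil, List.length_nil] at hl hb1 hb2
            have h1 : v'₂.length = 0 := by omega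
            rw [List.length_eq_zero_iff] at h1
            subst h1
            refine rw_congr (by simp) (by simp)
              (rw_single (Step.relInv w₁ w₂ v'₁ v₂ ?_))
            exact inr_symm (by simpa using hR)
          · by_cases hp2 : v'₁ = []
            · subst hp2
              simp only [winv_length, pos_length, List.length_append, winv_winv,
                List.append_nil, List.nil_append, pos_nil, winv_nil, List.length_nil] at hl hb1 hb2
              have h1 : v₂.length = 0 := by omega
              rw [List.length_eq_zero_iff] at h1
              subst h1
              refine rw_congr (by simp) (by simp)
                (rw_single (Step.rel w₁ w₂ v₁ v'₂ ?_))
              simpa using hR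
            · refine rw_congr (by simp) (by simp)
                (rw_single (Step.rev2r w₁ w₂ v'₁ v₁ v'₂ v₂ hp2 hq ?_))
              exact inr_symm hR

end Aux

/-- if every relation `v = v'` of the positive presentation `(S,R)`
satisfies `|len v − len v'| ≤ 2`, then `w ⇝_{0,D} w'` implies `w ⇝_{0,1,2} w'`. -/
theorem dehn_implies_special {S : Type}
    (R : Set (List S × List S)) (hpos : Positive R)
    (hlen : ∀ p ∈ R, |(p.1.length : ℤ) - (p.2.length : ℤ)| ≤ 2)
    (w w' : Word S) (h : Relation.ReflTransGen (DehnStep R) w w') :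
    Rw R w w' := by
  induction h with
  | refl => exact Relation.ReflTransGen.refl
  | tail _ hstep ih => exact ih.trans (dehn_single hlen hstep)

end ArtinConj
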